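/- A compact Hausdorff space K is quasi weakly Radon–Nikodým if and only if for EVERY set Γ and every homeomorphic embedding of K into [0,1]^Γ, and for every ε > 0, there exists a countable decomposition Γ = ⋃_{n∈ℕ} Γₙ^ε such that for every n ∈ ℕ and all real numbers p < q with q − p > ε, the family of pairs (A_α⁰, A_α¹)_{α∈Γₙ^ε} does not contain an independent sequence, where A_α⁰ = {x ∈ K : x_α < p} and A_α¹ = {x ∈ K : x_α > q} for every α ∈ Γ. -/

import Mathlib

open Set Function

/-- A sequence of pairs of subsets `(A n, B n)` of a set `S` is *independent* if for every
`n` and every choice function `ε`, the intersection over `k < n` of `A k` (if `ε k = 0/false`)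
or `B k` (if `ε k = 1/true`) is nonempty. -/
def IsIndependentSeq {S : Type*} (A B : ℕ → Set S) : Prop :=
  ∀ (n : ℕ) (ε : Fin n → Bool),
    (⋂ k : Fin n, if ε k = true then B (k : ℕ) else A (k : ℕ)).Nonempty

/-- A compact space `K` is *quasi weakly Radon–Nikodým* (QWRN) if there is a homeomorphic
embedding `i` of `K` into `[0,1]^Γ` for some set `Γ` such that for every `ε > 0` there is a
countable decomposition `Γ = ⋃ n, Γs n` such that for every `n` and all reals `p < q` with
`q - p > ε`, the family of pairs `({x | (i x α : ℝ) < p}, {x | (i x α : ℝ) > q})`, `α ∈ Γs n`,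
contains no independent sequence. -/
def IsQWRN (K : Type*) [TopologicalSpace K] : Prop :=
  ∃ (Γ : Type) (i : K → Γ → unitInterval), Topology.IsEmbedding i ∧
    ∀ ε : ℝ, ε > 0 → ∃ Γs : ℕ → Set Γ, (⋃ n, Γs n) = Set.univ ∧
      ∀ n : ℕ, ∀ p q : ℝ, q - p > ε →
        ¬ ∃ φ : ℕ → Γ, (∀ m, φ m ∈ Γs n) ∧
          IsIndependentSeq (fun m => {x : K | (i x (φ m) : ℝ) < p})
                           (fun m => {x : K | (i x (φ m) : ℝ) > q})

namespace QWRNAux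

/-! ### Nash–Williams theorem -/

variable (Fam : Set (Finset ℕ))

def Accept (F : Finset ℕ) (M : Set ℕ) : Prop :=
  ∀ N : Set ℕ, N ⊆ M → N.Infinite →
    ∃ B : Finset ℕ, ↑B ⊆ N ∧ (∀ b ∈ B, ∀ y ∈ N, y ∉ B → b < y) ∧ (F ∪ B) ∈ Fam

def Reject (F : Finset ℕ) (M : Set ℕ) : Prop :=
  ∀ M' : Set ℕ, M' ⊆ M → M'.Infinite → ¬ Accept Fam F M'

variable {Fam}

lemma Accept.mono {F M M'} (h : Accept Fam F M) (hsub : M' ⊆ M) : Accept Fam F M' :=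
  fun N hN hNi => h N (hN.trans hsub) hNi

lemma Reject.mono {F M M'} (h : Reject Fam F M) (hsub : M' ⊆ M) : Reject Fam F M' :=
  fun M'' hM'' => h M'' (hM''.trans hsub)

lemma accept_of_mem {F : Finset ℕ} (hF : F ∈ Fam) (M : Set ℕ) : Accept Fam F M := by
  intro N _ _
  exact ⟨∅, by simp, by simp, by simpa using hF⟩

variable (Fam) in
structure St where
  ch : Finset ℕ
  res : Set ℕ
  inf : res.Infinite
  ord : ∀ c ∈ ch, ∀ x ∈ res, c < x
  rej : ∀ F : Finset ℕ, F ⊆ ch → Reject Fam F res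

def StSpec (s s' : St Fam) : Prop :=
  s'.res ⊆ s.res ∧ (∀ x ∈ s'.res, sInf s.res < x) ∧
    ((s'.ch = insert (sInf s.res) s.ch ∧
        ∀ F : Finset ℕ, F ⊆ s.ch → Reject Fam (insert (sInf s.res) F) s'.res)
     ∨ (s'.ch = s.ch ∧ ∃ F : Finset ℕ, F ⊆ s.ch ∧ Accept Fam (insert (sInf s.res) F) s'.res))

lemma step_exists (s : St Fam) : ∃ s' : St Fam, StSpec s s' := by
  classical
  set m := sInf s.res with hm
  set X : Set ℕ := s.res ∩ {x | m < x} with hX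
  have hXinf : X.Infinite := by
    have : s.res \ {x | x ≤ m} ⊆ X := by
      intro x hx
      exact ⟨hx.1, by simpa using hx.2⟩
    exact ((s.inf.diff (Set.finite_le_nat m)).mono this)
  have hXsub : X ⊆ s.res := Set.inter_subset_left
  have hXgt : ∀ x ∈ X, m < x := fun x hx => hx.2
  by_cases h : ∃ F : Finset ℕ, F ⊆ s.ch ∧ ∃ M' : Set ℕ, M' ⊆ X ∧ M'.Infinite ∧
      Accept Fam (insert m F) M'
  · obtain ⟨F, hF, M', hM'X, hM'inf, hacc⟩ := h
    refine ⟨⟨s.ch, M', hM'inf, ?_, ?_⟩, ?_, ?_, Or.inr ⟨rfl, F, hF, hacc⟩⟩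
    · intro c hc x hx
      exact s.ord c hc x (hXsub (hM'X hx))
    · intro F' hF'
      exact (s.rej F' hF').mono (hM'X.trans hXsub)
    · exact hM'X.trans hXsub
    · intro x hx; exact hXgt x (hM'X hx)
  · push_neg at h
    refine ⟨⟨insert m s.ch, X, hXinf, ?_, ?_⟩, hXsub, hXgt, Or.inl ⟨rfl, ?_⟩⟩
    · intro c hc x hx
      rcases Finset.mem_insert.1 hc with rfl | hc
      · exact hXgt x hx
      · exact s.ord c hc x (hXsub hx)
    · intro F hF
      by_cases hmF : m ∈ F
      · have hsub : F.erase m ⊆ s.ch := by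
          intro a ha
          have := hF (Finset.mem_of_mem_erase ha)
          rcases Finset.mem_insert.1 this with rfl | h'
          · exact absurd (Finset.mem_erase.1 ha).1 (by simp)
          · exact h'
        have : Reject Fam (insert m (F.erase m)) X := by
          intro M' hM' hM'inf
          exact h (F.erase m) hsub M' hM' hM'inf
        rwa [Finset.insert_erase hmF] at this
      · have hsub : F ⊆ s.ch := by
          intro a ha
          rcases Finset.mem_insert.1 (hF ha) with rfl | h' 
          · exact absurd ha hmF
          · exact h'
        exact (s.rej F hsub).mono hXsub
    · intro F hF M' hM' hM'inf
      exact h F hF M' hM' hM'inf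

noncomputable def stepSt (s : St Fam) : St Fam := (step_exists s).choose

lemma stepSt_spec (s : St Fam) : StSpec s (stepSt s) := (step_exists s).choose_spec


noncomputable def states (s0 : St Fam) : ℕ → St Fam
  | 0 => s0
  | n + 1 => stepSt (states s0 n)

section states

variable (s0 : St Fam)

local notation "st" n => states s0 n

noncomputable def mseq (n : ℕ) : ℕ := sInf (states s0 n).res

lemma spec_succ (n : ℕ) : StSpec (states s0 n) (states s0 (n + 1)) := stepSt_spec _

lemma res_succ_sub (n : ℕ) : (states s0 (n + 1)).res ⊆ (states s0 n).res :=
  (spec_succ s0 n).1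

lemma res_mono : ∀ {a b : ℕ}, a ≤ b → (states s0 b).res ⊆ (states s0 a).res := by
  intro a b hab
  induction b with
  | zero => simp_all
  | succ b ih =>
    rcases Nat.lt_or_ge a (b + 1) with h | h
    · exact (res_succ_sub s0 b).trans (ih (Nat.lt_succ_iff.1 h))
    · have : a = b + 1 := le_antisymm hab h
      subst this; exact fun _ h => h

lemma mseq_mem (n : ℕ) : mseq s0 n ∈ (states s0 n).res :=
  Nat.sInf_mem (states s0 n).inf.nonempty

lemma mseq_lt_of_mem_succ {n : ℕ} {x : ℕ} (hx : x ∈ (states s0 (n + 1)).res) :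
    mseq s0 n < x := (spec_succ s0 n).2.1 x hx

lemma mseq_strictMono : StrictMono (mseq s0) := by
  apply strictMono_nat_of_lt_succ
  intro n
  exact mseq_lt_of_mem_succ s0 (mseq_mem s0 (n + 1))

lemma mseq_mem_res_of_lt {k n : ℕ} (h : k < n) : mseq s0 n ∈ (states s0 (k + 1)).res :=
  res_mono s0 h (mseq_mem s0 n)

lemma ch_succ (n : ℕ) :
    (states s0 (n + 1)).ch = insert (mseq s0 n) (states s0 n).ch ∨
      (states s0 (n + 1)).ch = (states s0 n).ch := by
  rcases (spec_succ s0 n).2.2 with h | h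
  · exact Or.inl h.1
  · exact Or.inr h.1

lemma ch_mono : ∀ {a b : ℕ}, a ≤ b → (states s0 a).ch ⊆ (states s0 b).ch := by
  intro a b hab
  induction b with
  | zero => simp_all
  | succ b ih =>
    rcases Nat.lt_or_ge a (b + 1) with h | h
    · have h2 := ih (Nat.lt_succ_iff.1 h)
      rcases ch_succ s0 b with h3 | h3 <;> rw [h3]
      · exact h2.trans (Finset.subset_insert _ _)
      · exact h2
    · have : a = b + 1 := le_antisymm hab h
      subst this; exact fun _ h => h

def KeepAt (n : ℕ) : Prop := mseq s0 n ∈ (states s0 (n + 1)).ch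

lemma mseq_not_mem_ch (n : ℕ) : mseq s0 n ∉ (states s0 n).ch := by
  intro h
  exact lt_irrefl _ ((states s0 n).ord _ h _ (mseq_mem s0 n))

lemma keep_iff (n : ℕ) :
    KeepAt s0 n ↔ (states s0 (n + 1)).ch = insert (mseq s0 n) (states s0 n).ch := by
  constructor
  · intro h
    rcases ch_succ s0 n with h2 | h2
    · exact h2
    · exfalso
      have h' : mseq s0 n ∈ (states s0 (n + 1)).ch := h
      rw [h2] at h'
      exact mseq_not_mem_ch s0 n h'
  · intro h
    have : mseq s0 n ∈ (states s0 (n + 1)).ch := by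
      rw [h]; exact Finset.mem_insert_self _ _
    exact this

lemma keep_rej {n : ℕ} (h : KeepAt s0 n) :
    ∀ F : Finset ℕ, F ⊆ (states s0 n).ch →
      Reject Fam (insert (mseq s0 n) F) (states s0 (n + 1)).res := by
  rcases (spec_succ s0 n).2.2 with h2 | h2
  · exact h2.2
  · exfalso
    have h' : mseq s0 n ∈ (states s0 (n + 1)).ch := h
    rw [h2.1] at h'
    exact mseq_not_mem_ch s0 n h'

lemma notkeep_acc {n : ℕ} (h : ¬ KeepAt s0 n) :
    ∃ F : Finset ℕ, F ⊆ (states s0 n).ch ∧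
      Accept Fam (insert (mseq s0 n) F) (states s0 (n + 1)).res := by
  rcases (spec_succ s0 n).2.2 with h2 | h2
  · exfalso
    apply h
    have : mseq s0 n ∈ (states s0 (n + 1)).ch := by
      rw [h2.1]; exact Finset.mem_insert_self _ _
    exact this
  · exact h2.2

end states
lemma exists_infinite_fiber' {β : Type*} (S : Set ℕ) (hS : S.Infinite) (g : ℕ → β)
    (T : Finset β) (hg : ∀ n ∈ S, g n ∈ T) :
    ∃ b, {n | n ∈ S ∧ g n = b}.Infinite := by
  by_contra h
  push_neg at h
  have hsub : S ⊆ ⋃ b ∈ (T : Set β), {n | n ∈ S ∧ g n = b} := by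
    intro n hn
    exact Set.mem_biUnion (hg n hn) ⟨hn, rfl⟩
  exact hS ((T.finite_toSet.biUnion (fun b _ => h b)).subset hsub)

section main

variable (s0 : St Fam)

lemma case_keeps_infinite (hK : {n | KeepAt s0 n}.Infinite) :
    ∃ M : Set ℕ, M.Infinite ∧ ∀ F : Finset ℕ, ↑F ⊆ M → F ∉ Fam := by
  refine ⟨mseq s0 '' {n | KeepAt s0 n}, hK.image ((mseq_strictMono s0).injective.injOn), ?_⟩
  intro F hF hFam
  have hch : ∀ x ∈ F, ∃ n, KeepAt s0 n ∧ mseq s0 n = x := by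
    intro x hx
    obtain ⟨n, hn, he⟩ := hF hx
    exact ⟨n, hn, he⟩
  choose idx hidx1 hidx2 using hch
  set j := F.attach.sup (fun x => idx x.1 x.2 + 1) with hj
  have hFch : F ⊆ (states s0 j).ch := by
    intro x hx
    have h1 : idx x hx + 1 ≤ j :=
      Finset.le_sup (f := fun y : {y // y ∈ F} => idx y.1 y.2 + 1) (Finset.mem_attach F ⟨x, hx⟩)
    have h2 : mseq s0 (idx x hx) ∈ (states s0 (idx x hx + 1)).ch := hidx1 x hx
    have h3 := ch_mono s0 h1 h2
    rwa [hidx2 x hx] at h3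
  exact (states s0 j).rej F hFch _ (fun _ h => h) (states s0 j).inf (accept_of_mem hFam _)

lemma accept_extract (F' : Finset ℕ) (J : Set ℕ) (hJ : J.Infinite)
    (hacc : ∀ n ∈ J, Accept Fam (insert (mseq s0 n) F') (states s0 (n + 1)).res) :
    Accept Fam F' (mseq s0 '' J) := by
  intro N₁ hsub hinf
  have hne := hinf.nonempty
  set a := sInf N₁ with ha
  have haN₁ : a ∈ N₁ := Nat.sInf_mem hne
  obtain ⟨n₁, hn₁J, hn₁e⟩ := hsub haN₁
  have hsub2 : N₁ \ {a} ⊆ (states s0 (n₁ + 1)).res := by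
    intro x hx
    obtain ⟨n₂, hn₂J, hn₂e⟩ := hsub hx.1
    have hax : a < x := by
      have h1 : a ≤ x := Nat.sInf_le hx.1
      have h2 : x ≠ a := by simpa using hx.2
      omega
    have hlt : n₁ < n₂ := by
      rw [← hn₁e, ← hn₂e] at hax
      exact (mseq_strictMono s0).lt_iff_lt.1 hax
    rw [← hn₂e]
    exact mseq_mem_res_of_lt s0 hlt
  have hinf2 : (N₁ \ {a}).Infinite := hinf.diff (Set.finite_singleton a)
  obtain ⟨B₁, hB₁sub, hB₁init, hB₁mem⟩ := hacc n₁ hn₁J _ hsub2 hinf2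
  refine ⟨insert a B₁, ?_, ?_, ?_⟩
  · intro b hb
    rcases Finset.mem_insert.1 (by exact_mod_cast hb) with rfl | hb2
    · exact haN₁
    · exact (hB₁sub hb2).1
  · intro b hb y hy hyB
    rcases Finset.mem_insert.1 hb with rfl | hb2
    · have h2 : y ≠ a := fun he => hyB (he ▸ Finset.mem_insert_self _ _)
      have h1 : a ≤ y := by rw [ha]; exact Nat.sInf_le hy
      omega
    · refine hB₁init b hb2 y ⟨hy, ?_⟩ (fun h => hyB (Finset.mem_insert_of_mem h))
      simp only [Set.mem_singleton_iff]
      intro he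
      exact hyB (he ▸ Finset.mem_insert_self _ _)
  · have heq : F' ∪ insert a B₁ = insert (mseq s0 n₁) F' ∪ B₁ := by
      rw [hn₁e, Finset.union_insert, Finset.insert_union]
    rw [heq]
    exact hB₁mem

lemma case_keeps_finite (hK : {n | KeepAt s0 n}.Finite) : False := by
  classical
  obtain ⟨s₀, hs₀⟩ : ∃ s₀ : ℕ, ∀ n, s₀ ≤ n → ¬ KeepAt s0 n := by
    rcases hK.bddAbove with ⟨b, hb⟩
    exact ⟨b + 1, fun n hn hkn => by have := hb hkn; omega⟩
  have hstab : ∀ n, s₀ ≤ n → (states s0 n).ch = (states s0 s₀).ch := by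
    intro n hn
    induction n with
    | zero =>
      have : s₀ = 0 := Nat.le_zero.1 hn
      rw [this]
    | succ n ih =>
      rcases Nat.lt_or_ge s₀ (n + 1) with hlt | hge
      · have hns : s₀ ≤ n := Nat.lt_succ_iff.1 hlt
        rcases ch_succ s0 n with hc | hc
        · exact absurd ((keep_iff s0 n).2 hc) (hs₀ n hns)
        · rw [hc]; exact ih hns
      · have : s₀ = n + 1 := le_antisymm hn hge
        rw [this]
  have hacc : ∀ n, s₀ ≤ n → ∃ F, F ⊆ (states s0 s₀).ch ∧
      Accept Fam (insert (mseq s0 n) F) (states s0 (n + 1)).res := by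
    intro n hn
    obtain ⟨F, hF, hA⟩ := notkeep_acc s0 (hs₀ n hn)
    exact ⟨F, by rw [← hstab n hn]; exact hF, hA⟩
  set g : ℕ → Finset ℕ := fun n => if h : s₀ ≤ n then (hacc n h).choose else ∅ with hg
  have hgmem : ∀ n ∈ {n | s₀ ≤ n}, g n ∈ (states s0 s₀).ch.powerset := by
    intro n hn
    have hn' : s₀ ≤ n := hn
    simp only [hg]
    rw [dif_pos hn']
    exact Finset.mem_powerset.2 (hacc n hn').choose_spec.1
  obtain ⟨F', hfib⟩ := exists_infinite_fiber' {n | s₀ ≤ n}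
    (Set.Ici_infinite s₀) g _ hgmem
  set J := {n | n ∈ {n | s₀ ≤ n} ∧ g n = F'} with hJdef
  have haccJ : ∀ n ∈ J, Accept Fam (insert (mseq s0 n) F') (states s0 (n + 1)).res := by
    intro n hn
    have hn1 : s₀ ≤ n := hn.1
    have hspec := (hacc n hn1).choose_spec.2
    have he : g n = (hacc n hn1).choose := dif_pos hn1
    rw [← he, hn.2] at hspec
    exact hspec
  have hF'sub : F' ⊆ (states s0 s₀).ch := by
    obtain ⟨n, hn⟩ := hfib.nonempty
    have := hgmem n hn.1
    rw [hn.2] at this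
    exact Finset.mem_powerset.1 this
  have hAF' := accept_extract s0 F' J hfib haccJ
  have hNsub : mseq s0 '' J ⊆ (states s0 s₀).res := by
    rintro x ⟨n, hn, rfl⟩
    exact res_mono s0 hn.1 (mseq_mem s0 n)
  have hNinf : (mseq s0 '' J).Infinite := hfib.image ((mseq_strictMono s0).injective.injOn)
  exact (states s0 s₀).rej F' hF'sub _ hNsub hNinf hAF'

end main

/-- The Nash–Williams theorem. -/
theorem nashWilliams (Fam : Set (Finset ℕ)) :
    (∃ M : Set ℕ, M.Infinite ∧ ∀ F : Finset ℕ, ↑F ⊆ M → F ∉ Fam) ∨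
    (∃ M : Set ℕ, M.Infinite ∧ ∀ N : Set ℕ, N ⊆ M → N.Infinite →
       ∃ B : Finset ℕ, ↑B ⊆ N ∧ (∀ b ∈ B, ∀ y ∈ N, y ∉ B → b < y) ∧ B ∈ Fam) := by
  by_cases h : ∃ M : Set ℕ, M.Infinite ∧ Accept Fam ∅ M
  · right
    obtain ⟨M, hMinf, hacc⟩ := h
    refine ⟨M, hMinf, fun N hN hNi => ?_⟩
    obtain ⟨B, h1, h2, h3⟩ := hacc N hN hNi
    exact ⟨B, h1, h2, by simpa using h3⟩
  · left
    push_neg at h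
    have hrej0 : ∀ F : Finset ℕ, F ⊆ (∅ : Finset ℕ) → Reject Fam F Set.univ := by
      intro F hF
      have : F = ∅ := Finset.subset_empty.1 hF
      subst this
      intro M' _ hM'inf hacc
      exact h M' hM'inf hacc
    set s0 : St Fam := ⟨∅, Set.univ, Set.infinite_univ, by simp, hrej0⟩ with hs0
    by_cases hK : {n | KeepAt s0 n}.Infinite
    · exact case_keeps_infinite s0 hK
    · exact absurd (case_keeps_finite s0 (Set.not_infinite.1 hK)) (by simp)



/-! ### rank and initial-segment helpers -/

lemma rank_image (g : ℕ → ℕ) (hg : StrictMono g) {n r : ℕ} (hr : r < n) :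
    (((Finset.range n).image g).filter (· < g r)).card = r := by
  classical
  have h1 : ((Finset.range n).image g).filter (· < g r) = (Finset.range r).image g := by
    ext y
    simp only [Finset.mem_filter, Finset.mem_image, Finset.mem_range]
    constructor
    · rintro ⟨⟨j, hj, rfl⟩, hlt⟩
      exact ⟨j, hg.lt_iff_lt.1 hlt, rfl⟩
    · rintro ⟨j, hj, rfl⟩
      exact ⟨⟨j, hj.trans hr, rfl⟩, hg hj⟩
  rw [h1, Finset.card_image_of_injective _ hg.injective, Finset.card_range]

lemma initial_eq_image (E : ℕ → ℕ) (hE : StrictMono E) (B : Finset ℕ)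
    (hsub : ↑B ⊆ Set.range E)
    (hinit : ∀ b ∈ B, ∀ y ∈ Set.range E, y ∉ B → b < y) :
    B = (Finset.range B.card).image E := by
  classical
  have hdc : ∀ j, E j ∈ B → ∀ j' ≤ j, E j' ∈ B := by
    intro j hj j' hj'
    by_contra hne
    have := hinit (E j) hj (E j') ⟨j', rfl⟩ hne
    have := hE.le_iff_le.2 hj'
    omega
  have claim1 : ∀ j < B.card, E j ∈ B := by
    intro j hj
    by_contra hne
    have hBsub : B ⊆ (Finset.range j).image E := by
      intro b hb
      obtain ⟨jb, rfl⟩ := hsub hb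
      have hjb : jb < j := by
        by_contra hge
        exact hne (hdc jb hb j (by omega))
      exact Finset.mem_image.2 ⟨jb, Finset.mem_range.2 hjb, rfl⟩
    have := Finset.card_le_card hBsub
    rw [Finset.card_image_of_injective _ hE.injective, Finset.card_range] at this
    omega
  have claim2 : ∀ b ∈ B, ∃ j < B.card, E j = b := by
    intro b hb
    obtain ⟨jb, rfl⟩ := hsub hb
    refine ⟨jb, ?_, rfl⟩
    by_contra hge
    have hsub2 : (Finset.range (jb + 1)).image E ⊆ B := by
      intro y hy
      obtain ⟨j, hj, rfl⟩ := Finset.mem_image.1 hy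
      exact hdc jb hb j (by simp at hj; omega)
    have := Finset.card_le_card hsub2
    rw [Finset.card_image_of_injective _ hE.injective, Finset.card_range] at this
    omega
  ext y
  simp only [Finset.mem_image, Finset.mem_range]
  constructor
  · intro hy
    obtain ⟨j, hj, he⟩ := claim2 y hy
    exact ⟨j, hj, he⟩
  · rintro ⟨j, hj, rfl⟩
    exact claim1 j hj

/-! ### the abstract cell system -/

section Key

variable {X : Type*} {σT : Type*} [Fintype σT] [DecidableEq σT]
variable (L H : Finset σT) (C : ℕ → σT → Set X)

/-- Union-independence of the labelled system: every finite prefix role pattern has a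
realizable refinement. -/
def UIndep : Prop :=
  ∀ (n : ℕ) (ν : ℕ → Bool), ∃ δ : ℕ → σT,
    (∀ i < n, if ν i = true then δ i ∈ H else δ i ∈ L) ∧
    (⋂ i ∈ Finset.range n, C i (δ i)).Nonempty

variable {L H}

/-- Alternating-word realizability on a finite set (rank parity roles). -/
def QF (c d : σT) (F : Finset ℕ) : Prop :=
  ∃ x, ∀ y ∈ F, x ∈ C y (if (F.filter (· < y)).card % 2 = 0 then c else d)

lemma QF_image (c d : σT) (g : ℕ → ℕ) (hg : StrictMono g) (n : ℕ) :
    QF C c d ((Finset.range n).image g) ↔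
      ∃ x, ∀ r < n, x ∈ C (g r) (if r % 2 = 0 then c else d) := by
  constructor
  · rintro ⟨x, hx⟩
    refine ⟨x, fun r hr => ?_⟩
    have := hx (g r) (Finset.mem_image.2 ⟨r, Finset.mem_range.2 hr, rfl⟩)
    rwa [rank_image g hg hr] at this
  · rintro ⟨x, hx⟩
    refine ⟨x, fun y hy => ?_⟩
    obtain ⟨r, hr, rfl⟩ := Finset.mem_image.1 hy
    rw [Finset.mem_range] at hr
    rw [rank_image g hg hr]
    exact hx r hr

/-- Every strictly monotone sequence has a "bad" (unrealizable) alternating prefix. -/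
def BadE (c d : σT) : Prop :=
  ∀ E : ℕ → ℕ, StrictMono E →
    ∃ s : ℕ, ¬ ∃ x, ∀ r < s, x ∈ C (E r) (if r % 2 = 0 then c else d)


lemma setOf_mem_infinite {M : Set ℕ} (h : M.Infinite) : {x | (fun y => y ∈ M) x}.Infinite := by
  simpa using h

theorem pair_dichotomy (c d : σT) :
    (∃ e : ℕ → ℕ, StrictMono e ∧ ∀ (n : ℕ) (ν : Fin n → Bool),
       (⋂ k : Fin n, if ν k = true then C (e (k : ℕ)) d else C (e (k : ℕ)) c).Nonempty) ∨
    (∃ E0 : ℕ → ℕ, StrictMono E0 ∧ BadE (fun i σ => C (E0 i) σ) c d) := by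
  classical
  rcases nashWilliams {F : Finset ℕ | ¬ QF C c d F} with ⟨M, hMinf, hM⟩ | ⟨M, hMinf, hM⟩
  · left
    have hpinf := setOf_mem_infinite hMinf
    set nth : ℕ → ℕ := Nat.nth (fun y => y ∈ M) with hnth
    have hnthmono : StrictMono nth := Nat.nth_strictMono hpinf
    have hnthmem : ∀ i, nth i ∈ M := fun i => Nat.nth_mem_of_infinite hpinf i
    refine ⟨fun i => nth (3 * i + 1), ?_, ?_⟩
    · exact hnthmono.comp (fun a b hab => by omega)
    intro n ν
    set ι : ℕ → ℕ := fun r =>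
      3 * (r / 2) + (if h : r / 2 < n then
        (if ν ⟨r / 2, h⟩ = true then r % 2 else r % 2 + 1) else r % 2 + 1) with hι
    have hιmono : StrictMono ι := by
      apply strictMono_nat_of_lt_succ
      intro r
      by_cases h2 : r % 2 = 0
      · have e1 : (r + 1) / 2 = r / 2 := by omega
        have e2 : (r + 1) % 2 = 1 := by omega
        simp only [hι, e1, e2, h2]
        split_ifs <;> omega
      · have e1 : (r + 1) / 2 = r / 2 + 1 := by omega
        have e2 : (r + 1) % 2 = 0 := by omega
        have e3 : r % 2 = 1 := by omega
        simp only [hι, e1, e2, e3]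
        split_ifs <;> omega
    set g : ℕ → ℕ := fun r => nth (ι r) with hg
    have hgmono : StrictMono g := hnthmono.comp hιmono
    have hFsub : ↑((Finset.range (2 * n)).image g) ⊆ M := by
      intro y hy
      simp only [Finset.coe_image, Set.mem_image] at hy
      obtain ⟨r, _, rfl⟩ := hy
      exact hnthmem _
    have hQF : QF C c d ((Finset.range (2 * n)).image g) :=
      not_not.1 (hM _ hFsub)
    rw [QF_image C c d g hgmono] at hQF
    obtain ⟨x, hx⟩ := hQF
    refine ⟨x, ?_⟩
    rw [Set.mem_iInter]
    intro k
    set r : ℕ := 2 * (k : ℕ) + (if ν k = true then 1 else 0) with hr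
    have hrlt : r < 2 * n := by
      have := k.isLt
      by_cases hν : ν k = true <;> simp [hr, hν] <;> omega
    have hdiv : r / 2 = (k : ℕ) := by
      by_cases hν : ν k = true <;> simp [hr, hν] <;> omega
    have hmod : r % 2 = (if ν k = true then 1 else 0) := by
      by_cases hν : ν k = true <;> simp [hr, hν] <;> omega
    have hιr : ι r = 3 * (k : ℕ) + 1 := by
      simp only [hι, hdiv, hmod]
      rw [dif_pos k.isLt]
      have hfin : (⟨(k : ℕ), k.isLt⟩ : Fin n) = k := by
        apply Fin.ext; rfl
      rw [hfin]
      by_cases hν : ν k = true <;> simp [hν]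
    have hmem := hx r hrlt
    by_cases hν : ν k = true
    · have : r % 2 ≠ 0 := by rw [hmod, if_pos hν]; omega
      rw [if_neg this] at hmem
      simp only [hg, hιr] at hmem
      simp only [if_pos hν]
      exact hmem
    · have : r % 2 = 0 := by rw [hmod, if_neg hν]
      rw [if_pos this] at hmem
      simp only [hg, hιr] at hmem
      simp only [if_neg hν]
      exact hmem
  · right
    have hpinf := setOf_mem_infinite hMinf
    refine ⟨Nat.nth (fun y => y ∈ M), Nat.nth_strictMono hpinf, ?_⟩
    intro E hE
    set G : ℕ → ℕ := fun r => Nat.nth (fun y => y ∈ M) (E r) with hG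
    have hGmono : StrictMono G := (Nat.nth_strictMono hpinf).comp hE
    have hNsub : Set.range G ⊆ M := by
      rintro y ⟨r, rfl⟩
      exact Nat.nth_mem_of_infinite hpinf _
    have hNinf : (Set.range G).Infinite := Set.infinite_range_of_injective hGmono.injective
    obtain ⟨B, hBsub, hBinit, hBbad⟩ := hM (Set.range G) hNsub hNinf
    refine ⟨B.card, ?_⟩
    have hBeq := initial_eq_image G hGmono B hBsub hBinit
    rw [Set.mem_setOf_eq, hBeq, QF_image C c d G hGmono] at hBbad
    exact hBbad


/-! ### the stream construction -/

variable (L H)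

def Astream (n : ℕ) : Set (ℕ → σT) :=
  {δ | (∀ i < n, if i % 2 = 1 then δ i ∈ H else δ i ∈ L) ∧
       (⋂ i ∈ Finset.range n, C i (δ i)).Nonempty}

variable {C}

lemma Astream_nonempty (hU : UIndep L H C) (n : ℕ) : (Astream L H C n).Nonempty := by
  obtain ⟨δ, h1, h2⟩ := hU n (fun i => decide (i % 2 = 1))
  refine ⟨δ, fun i hi => ?_, h2⟩
  have h3 := h1 i hi
  by_cases h : i % 2 = 1
  · rw [if_pos h]
    rw [if_pos (by simp [h])] at h3
    exact h3
  · rw [if_neg h]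
    rw [if_neg (by simp [h])] at h3
    exact h3

lemma Astream_anti {m n : ℕ} (h : m ≤ n) : Astream L H C n ⊆ Astream L H C m := by
  rintro δ ⟨h1, h2⟩
  refine ⟨fun i hi => h1 i (lt_of_lt_of_le hi h), h2.mono ?_⟩
  intro x hx
  rw [Set.mem_iInter₂] at hx ⊢
  intro i hi
  exact hx i (Finset.mem_range.2 (lt_of_lt_of_le (Finset.mem_range.1 hi) h))

lemma Astream_congr {n : ℕ} {δ δ' : ℕ → σT} (hagree : ∀ i < n, δ' i = δ i)
    (h : δ' ∈ Astream L H C n) : δ ∈ Astream L H C n := by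
  obtain ⟨h1, h2⟩ := h
  refine ⟨fun i hi => by rw [← hagree i hi]; exact h1 i hi, ?_⟩
  have heq : (⋂ i ∈ Finset.range n, C i (δ' i)) = ⋂ i ∈ Finset.range n, C i (δ i) := by
    apply Set.iInter₂_congr
    intro i hi
    rw [hagree i (Finset.mem_range.1 hi)]
  rwa [heq] at h2

def ExtP (n : ℕ) (δ : ℕ → σT) : Prop :=
  ∀ m : ℕ, ∃ δ' ∈ Astream L H C m, ∀ i < n, δ' i = δ i

lemma extP_zero (hU : UIndep L H C) : ∃ δ, ExtP L H (C := C) 0 δ := by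
  obtain ⟨δ0, hδ0⟩ := Astream_nonempty L H hU 0
  refine ⟨δ0, fun m => ?_⟩
  obtain ⟨δ', hδ'⟩ := Astream_nonempty L H hU m
  exact ⟨δ', hδ', by omega⟩

lemma extP_step (n : ℕ) (δ : ℕ → σT) (h : ExtP L H (C := C) n δ) :
    ∃ a, ExtP L H (C := C) (n + 1) (Function.update δ n a) := by
  classical
  choose D hD1 hD2 using h
  obtain ⟨a, hfib⟩ := exists_infinite_fiber' Set.univ Set.infinite_univ
    (fun m => D m n) Finset.univ (by simp)
  refine ⟨a, fun m => ?_⟩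
  obtain ⟨m', hm', hmm'⟩ := hfib.exists_gt m
  refine ⟨D m', Astream_anti L H (le_of_lt hmm') (hD1 m'), ?_⟩
  intro i hi
  rcases Nat.lt_or_ge i n with h2 | h2
  · rw [hD2 m' i h2, Function.update_of_ne (by omega)]
  · have hin : i = n := by omega
    subst hin
    rw [Function.update_self]
    exact hm'.2

noncomputable def prefP (hU : UIndep L H C) : ∀ n : ℕ, {δ : ℕ → σT // ExtP L H (C := C) n δ}
  | 0 => ⟨(extP_zero L H hU).choose, (extP_zero L H hU).choose_spec⟩
  | n + 1 => ⟨Function.update (prefP hU n).1 n (extP_step L H n _ (prefP hU n).2).choose,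
      (extP_step L H n _ (prefP hU n).2).choose_spec⟩

noncomputable def streamσ (hU : UIndep L H C) : ℕ → σT :=
  fun i => (prefP L H hU (i + 1)).1 i

lemma streamσ_agree (hU : UIndep L H C) :
    ∀ n i, i < n → (prefP L H hU n).1 i = streamσ L H hU i := by
  intro n
  induction n with
  | zero => omega
  | succ n ih =>
    intro i hi
    rcases Nat.lt_or_ge i n with h2 | h2
    · show Function.update (prefP L H hU n).1 n _ i = _
      rw [Function.update_of_ne (by omega)]
      exact ih i h2
    · have hin : i = n := by omega
      subst hin
      rfl

lemma streamσ_mem (hU : UIndep L H C) (n : ℕ) : streamσ L H hU ∈ Astream L H C n := by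
  have h := (prefP L H hU n).2 n
  obtain ⟨δ', hδ'mem, hδ'ag⟩ := h
  have h1 : (prefP L H hU n).1 ∈ Astream L H C n := Astream_congr L H hδ'ag hδ'mem
  exact Astream_congr L H (fun i hi => streamσ_agree L H hU n i hi) h1

theorem stream_contra (hU : UIndep L H C)
    (hbad : ∀ c ∈ L, ∀ d ∈ H, BadE C c d) : False := by
  classical
  set σ := streamσ L H hU with hσ
  have hrole : ∀ i, if i % 2 = 1 then σ i ∈ H else σ i ∈ L :=
    fun i => (streamσ_mem L H hU (i + 1)).1 i (by omega)
  set f : ℕ → σT × σT := fun i => (σ (2 * i), σ (2 * i + 1)) with hf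
  obtain ⟨⟨c₀, d₀⟩, hfib⟩ := exists_infinite_fiber' Set.univ Set.infinite_univ
    f Finset.univ (by simp)
  obtain ⟨i₀, hi₀⟩ := hfib.nonempty
  have hfc : ∀ i, f i = (c₀, d₀) → σ (2 * i) = c₀ ∧ σ (2 * i + 1) = d₀ := by
    intro i hi
    have h1 := congrArg Prod.fst hi
    have h2 := congrArg Prod.snd hi
    exact ⟨h1, h2⟩
  have hc₀L : c₀ ∈ L := by
    have := hrole (2 * i₀)
    rw [if_neg (by omega)] at this
    rw [← (hfc i₀ hi₀.2).1]
    exact this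
  have hd₀H : d₀ ∈ H := by
    have := hrole (2 * i₀ + 1)
    rw [if_pos (by omega)] at this
    rw [← (hfc i₀ hi₀.2).2]
    exact this
  have hpinf : {i | f i = (c₀, d₀)}.Infinite := by
    have heqs : {m | m ∈ Set.univ ∧ f m = (c₀, d₀)} = {i | f i = (c₀, d₀)} := by
      ext i; simp
    rwa [heqs] at hfib
  set u : ℕ → ℕ := Nat.nth (fun i => f i = (c₀, d₀)) with hu
  have humono : StrictMono u := Nat.nth_strictMono hpinf
  have humem : ∀ j, f (u j) = (c₀, d₀) := fun j => Nat.nth_mem_of_infinite hpinf j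
  set E : ℕ → ℕ := fun r => 2 * u (r / 2) + r % 2 with hE
  have hEmono : StrictMono E := by
    apply strictMono_nat_of_lt_succ
    intro r
    by_cases h2 : r % 2 = 0
    · have e1 : (r + 1) / 2 = r / 2 := by omega
      have e2 : (r + 1) % 2 = 1 := by omega
      simp only [hE, e1, e2]
      omega
    · have e1 : (r + 1) / 2 = r / 2 + 1 := by omega
      have e2 : (r + 1) % 2 = 0 := by omega
      have := humono (show r / 2 < r / 2 + 1 by omega)
      simp only [hE, e1, e2]
      omega
  obtain ⟨s, hs⟩ := hbad c₀ hc₀L d₀ hd₀H E hEmono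
  apply hs
  set N := 2 * u s + 2 with hN
  have hbound : ∀ r < s, E r < N := by
    intro r hr
    have h1 : u (r / 2) ≤ u s := humono.monotone (by omega)
    simp only [hE, hN]
    omega
  obtain ⟨x, hx⟩ := (streamσ_mem L H hU N).2
  refine ⟨x, fun r hr => ?_⟩
  have hxEr : x ∈ C (E r) (σ (E r)) := Set.mem_iInter₂.1 hx (E r) (Finset.mem_range.2 (hbound r hr))
  by_cases hpar : r % 2 = 0
  · rw [if_pos hpar]
    have hEr : E r = 2 * u (r / 2) := by simp only [hE]; omega
    have hv : σ (E r) = c₀ := by rw [hEr]; exact (hfc _ (humem (r / 2))).1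
    rwa [hv] at hxEr
  · rw [if_neg hpar]
    have hEr : E r = 2 * u (r / 2) + 1 := by simp only [hE]; omega
    have hv : σ (E r) = d₀ := by rw [hEr]; exact (hfc _ (humem (r / 2))).2
    rwa [hv] at hxEr


/-! ### re-indexing and the key lemma -/

lemma uIndep_reindex (hU : UIndep L H C) (E : ℕ → ℕ) (hE : StrictMono E) :
    UIndep L H (fun i σ => C (E i) σ) := by
  classical
  intro n ν
  set ν' : ℕ → Bool := fun y => if h : ∃ i, i < n ∧ E i = y then ν h.choose else false with hν'
  obtain ⟨δ, h1, h2⟩ := hU (E n + 1) ν'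
  refine ⟨fun i => δ (E i), fun i hi => ?_, ?_⟩
  · have hEi : E i < E n + 1 := by
      have := hE (show i < n from hi)
      omega
    have h3 := h1 (E i) hEi
    have hch : ν' (E i) = ν i := by
      have hex : ∃ j, j < n ∧ E j = E i := ⟨i, hi, rfl⟩
      simp only [hν', dif_pos hex]
      have hcs := hex.choose_spec
      have : hex.choose = i := hE.injective hcs.2
      rw [this]
    rwa [hch] at h3
  · apply h2.mono
    intro x hx
    rw [Set.mem_iInter₂] at hx ⊢
    intro i hi
    refine hx (E i) (Finset.mem_range.2 ?_)
    have := hE.le_iff_le.2 (le_of_lt (Finset.mem_range.1 hi))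
    have h4 := hE (show i < n from Finset.mem_range.1 hi)
    omega

lemma badE_reindex {c d : σT} (h : BadE C c d) (E : ℕ → ℕ) (hE : StrictMono E) :
    BadE (fun i σ => C (E i) σ) c d :=
  fun E' hE' => h (E ∘ E') (hE.comp hE')

theorem keyLemma (hU : UIndep L H C) :
    ∃ c ∈ L, ∃ d ∈ H, ∃ e : ℕ → ℕ, StrictMono e ∧ ∀ (n : ℕ) (ν : Fin n → Bool),
      (⋂ k : Fin n, if ν k = true then C (e (k : ℕ)) d else C (e (k : ℕ)) c).Nonempty := by
  classical
  suffices h : ∀ (l : List (σT × σT)) (C' : ℕ → σT → Set X), UIndep L H C' →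
      (∀ c ∈ L, ∀ d ∈ H, ((c, d) ∈ l ∨ BadE C' c d)) →
      ∃ c ∈ L, ∃ d ∈ H, ∃ e : ℕ → ℕ, StrictMono e ∧ ∀ (n : ℕ) (ν : Fin n → Bool),
        (⋂ k : Fin n, if ν k = true then C' (e (k : ℕ)) d else C' (e (k : ℕ)) c).Nonempty by
    exact h (Finset.univ : Finset (σT × σT)).toList C hU
      (fun c _ d _ => Or.inl (by simp [Finset.mem_toList]))
  intro l
  induction l with
  | nil =>
    intro C' hU' hall
    exact absurd (stream_contra L H hU'
      (fun c hc d hd => (hall c hc d hd).resolve_left List.not_mem_nil)) not_false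
  | cons p rest ih =>
    intro C' hU' hall
    rcases pair_dichotomy C' p.1 p.2 with ⟨e, he, hind⟩ | ⟨E0, hE0, hbad⟩
    · by_cases hp : p.1 ∈ L ∧ p.2 ∈ H
      · exact ⟨p.1, hp.1, p.2, hp.2, e, he, hind⟩
      · apply ih C' hU'
        intro c hc d hd
        rcases hall c hc d hd with hmem | hb
        · rcases List.mem_cons.1 hmem with he2 | hm
          · exfalso
            apply hp
            have h1 : c = p.1 := congrArg Prod.fst he2
            have h2 : d = p.2 := congrArg Prod.snd he2
            exact ⟨h1 ▸ hc, h2 ▸ hd⟩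
          · exact Or.inl hm
        · exact Or.inr hb
    · have hside : ∀ c ∈ L, ∀ d ∈ H, ((c, d) ∈ rest ∨ BadE (fun i σ => C' (E0 i) σ) c d) := by
        intro c hc d hd
        rcases hall c hc d hd with hmem | hb
        · rcases List.mem_cons.1 hmem with he2 | hm
          · right
            have h1 : c = p.1 := congrArg Prod.fst he2
            have h2 : d = p.2 := congrArg Prod.snd he2
            rw [h1, h2]
            exact hbad
          · exact Or.inl hm
        · exact Or.inr (badE_reindex (C := C') hb E0 hE0)
      obtain ⟨c, hc, d, hd, e, he, hind⟩ := ih (fun i σ => C' (E0 i) σ)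
        (uIndep_reindex L H (C := C') hU' E0 hE0) hside
      exact ⟨c, hc, d, hd, E0 ∘ e, hE0.comp he, hind⟩


end Key

/-! ### analytic helpers -/

section Analytic

variable {K : Type} [TopologicalSpace K] [CompactSpace K]
variable {Γ₀ : Type} {i₀ : K → Γ₀ → unitInterval}

lemma modulus_lemma (hemb : Topology.IsEmbedding i₀) {f : K → ℝ} (hf : Continuous f)
    {δ : ℝ} (hδ : 0 < δ) :
    ∃ (k : ℕ) (β : Fin k → Γ₀) (η : ℝ), 0 < η ∧
      ∀ x y : K, (∀ l, |(i₀ x (β l) : ℝ) - (i₀ y (β l) : ℝ)| ≤ η) → |f x - f y| ≤ δ := by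
  classical
  have hi₀cont : Continuous i₀ := hemb.continuous
  have hgcont : ∀ β : Γ₀, Continuous fun x : K => (i₀ x β : ℝ) :=
    fun β => continuous_subtype_val.comp ((continuous_apply β).comp hi₀cont)
  set D : Set (K × K) := {z | δ ≤ |f z.1 - f z.2|} with hD
  have hDclosed : IsClosed D := by
    have hc : Continuous fun z : K × K => |f z.1 - f z.2| :=
      ((hf.comp continuous_fst).sub (hf.comp continuous_snd)).abs
    exact isClosed_le continuous_const hc
  have hDcompact : IsCompact D := hDclosed.isCompact
  have hchoice : ∀ z : D, ∃ β : Γ₀, (i₀ (z : K × K).1 β : ℝ) ≠ (i₀ (z : K × K).2 β : ℝ) := by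
    rintro ⟨z, hz⟩
    have hne : z.1 ≠ z.2 := by
      intro he
      have hz' : δ ≤ |f z.1 - f z.2| := hz
      rw [he] at hz'
      simp at hz'
      linarith
    have hine : i₀ z.1 ≠ i₀ z.2 := fun he => hne (hemb.injective he)
    by_contra hc
    push_neg at hc
    apply hine
    funext β
    exact Subtype.ext (hc β)
  choose βz hβz using hchoice
  set r : D → ℝ := fun z => |(i₀ (z : K × K).1 (βz z) : ℝ) - (i₀ (z : K × K).2 (βz z) : ℝ)|
    with hr
  have hrpos : ∀ z : D, 0 < r z := by
    intro z
    exact abs_pos.2 (sub_ne_zero.2 (hβz z))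
  set U : D → Set (K × K) := fun z =>
    {w | |(i₀ w.1 (βz z) : ℝ) - (i₀ (z : K × K).1 (βz z) : ℝ)| < r z / 4 ∧
         |(i₀ w.2 (βz z) : ℝ) - (i₀ (z : K × K).2 (βz z) : ℝ)| < r z / 4} with hU
  have hUopen : ∀ z, IsOpen (U z) := by
    intro z
    apply IsOpen.inter
    · have hc : Continuous fun w : K × K =>
          |(i₀ w.1 (βz z) : ℝ) - (i₀ (z : K × K).1 (βz z) : ℝ)| :=
        (((hgcont (βz z)).comp continuous_fst).sub continuous_const).abs
      exact isOpen_lt hc continuous_const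
    · have hc : Continuous fun w : K × K =>
          |(i₀ w.2 (βz z) : ℝ) - (i₀ (z : K × K).2 (βz z) : ℝ)| :=
        (((hgcont (βz z)).comp continuous_snd).sub continuous_const).abs
      exact isOpen_lt hc continuous_const
  have hcover : D ⊆ ⋃ z : D, U z := by
    intro z hz
    refine Set.mem_iUnion.2 ⟨⟨z, hz⟩, ?_⟩
    constructor <;>
      · simp only [sub_self, abs_zero]
        exact div_pos (hrpos ⟨z, hz⟩) (by norm_num)
  obtain ⟨T, hTcov⟩ := hDcompact.elim_finite_subcover U hUopen hcover
  by_cases hTne : T.Nonempty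
  · set η := (T.inf' hTne r) / 4 with hη
    have hηpos : 0 < η := by
      apply div_pos _ (by norm_num)
      rw [Finset.lt_inf'_iff]
      intro z _
      exact hrpos z
    refine ⟨T.card, fun l => βz (T.equivFin.symm l : D), η, hηpos, ?_⟩
    intro x y hclose
    by_contra habs
    have hxyD : (x, y) ∈ D := le_of_lt (lt_of_not_ge fun h => habs (by simpa using h))
    obtain ⟨z, hzT, hzU⟩ := Set.mem_iUnion₂.1 (hTcov hxyD)
    have hcl : |(i₀ x (βz z) : ℝ) - (i₀ y (βz z) : ℝ)| ≤ η := by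
      have h0 := hclose (T.equivFin ⟨z, hzT⟩)
      simpa using h0
    have h1 : |(i₀ x (βz z) : ℝ) - (i₀ (z : K × K).1 (βz z) : ℝ)| < r z / 4 := hzU.1
    have h2 : |(i₀ y (βz z) : ℝ) - (i₀ (z : K × K).2 (βz z) : ℝ)| < r z / 4 := hzU.2
    have h3 : η ≤ r z / 4 := by
      have := Finset.inf'_le r hzT
      rw [hη]
      linarith
    have tri : r z ≤ |(i₀ (z : K × K).1 (βz z) : ℝ) - (i₀ x (βz z) : ℝ)| +
        (|(i₀ x (βz z) : ℝ) - (i₀ y (βz z) : ℝ)| +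
         |(i₀ y (βz z) : ℝ) - (i₀ (z : K × K).2 (βz z) : ℝ)|) := by
      have t1 := abs_sub_le ((i₀ (z : K × K).1 (βz z)) : ℝ) ((i₀ x (βz z)) : ℝ)
        ((i₀ (z : K × K).2 (βz z)) : ℝ)
      have t2 := abs_sub_le ((i₀ x (βz z)) : ℝ) ((i₀ y (βz z)) : ℝ)
        ((i₀ (z : K × K).2 (βz z)) : ℝ)
      have : r z = |(i₀ (z : K × K).1 (βz z) : ℝ) - (i₀ (z : K × K).2 (βz z) : ℝ)| := rfl
      linarith [this]
    rw [abs_sub_comm ((i₀ (z : K × K).1 (βz z)) : ℝ) ((i₀ x (βz z)) : ℝ)] at tri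
    have := hrpos z
    linarith
  · refine ⟨0, fun l => (Fin.elim0 l), 1, one_pos, ?_⟩
    intro x y _
    by_contra habs
    have hxyD : (x, y) ∈ D := le_of_lt (lt_of_not_ge fun h => habs (by simpa using h))
    obtain ⟨z, hzT, _⟩ := Set.mem_iUnion₂.1 (hTcov hxyD)
    exact hTne ⟨z, hzT⟩


lemma exists_cell_index {a : ℝ} (ha : a ∈ Set.Icc (0:ℝ) 1) (N' : ℕ) :
    ∃ j : Fin (N' + 1), a ∈ Set.Icc ((j : ℝ) / (N' + 1)) (((j : ℝ) + 1) / (N' + 1)) := by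
  have hN : (0:ℝ) < (N' : ℝ) + 1 := by positivity
  set m := Nat.floor (a * ((N' : ℝ) + 1)) with hm
  have hfl : (m : ℝ) ≤ a * ((N' : ℝ) + 1) := Nat.floor_le (mul_nonneg ha.1 hN.le)
  have hfu : a * ((N' : ℝ) + 1) < (m : ℝ) + 1 := Nat.lt_floor_add_one _
  by_cases hcase : m ≤ N'
  · refine ⟨⟨m, by omega⟩, ?_, ?_⟩
    · rw [div_le_iff₀ hN]
      exact_mod_cast hfl
    · rw [le_div_iff₀ hN]
      push_cast
      linarith
  · have hge : (N' : ℝ) + 1 ≤ (m : ℝ) := by exact_mod_cast (by omega : N' + 1 ≤ m)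
    have ha1 : a = 1 := by
      have h1 : (N' : ℝ) + 1 ≤ a * ((N' : ℝ) + 1) := by linarith
      have h2 : (1 : ℝ) ≤ a := by nlinarith
      linarith [ha.2]
    refine ⟨⟨N', by omega⟩, ?_, ?_⟩
    · rw [ha1, div_le_one hN]
      push_cast
      linarith
    · rw [ha1, le_div_iff₀ hN]
      push_cast
      linarith

lemma dist_le_of_adjacent_cells {a b : ℝ} {N' j j' : ℕ}
    (ha : a ∈ Set.Icc ((j : ℝ) / (N' + 1)) (((j : ℝ) + 1) / (N' + 1)))
    (hb : b ∈ Set.Icc ((j' : ℝ) / (N' + 1)) (((j' : ℝ) + 1) / (N' + 1)))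
    (h1 : j ≤ j' + 1) (h2 : j' ≤ j + 1) :
    |a - b| ≤ 2 / ((N' : ℝ) + 1) := by
  have hN : (0:ℝ) < (N' : ℝ) + 1 := by positivity
  have hc1 : ((j : ℝ) + 1) - (j' : ℝ) ≤ 2 := by
    have : (j : ℝ) ≤ (j' : ℝ) + 1 := by exact_mod_cast h1
    linarith
  have hc2 : ((j' : ℝ) + 1) - (j : ℝ) ≤ 2 := by
    have : (j' : ℝ) ≤ (j : ℝ) + 1 := by exact_mod_cast h2
    linarith
  rw [abs_le]
  constructor
  · have hu : b - a ≤ (((j' : ℝ) + 1) - (j : ℝ)) / ((N' : ℝ) + 1) := by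
      have := ha.1
      have := hb.2
      rw [sub_div]
      linarith
    have : (((j' : ℝ) + 1) - (j : ℝ)) / ((N' : ℝ) + 1) ≤ 2 / ((N' : ℝ) + 1) :=
      (div_le_div_iff_of_pos_right hN).2 hc2
    linarith
  · have hu : a - b ≤ (((j : ℝ) + 1) - (j' : ℝ)) / ((N' : ℝ) + 1) := by
      have := ha.2
      have := hb.1
      rw [sub_div]
      linarith
    have : (((j : ℝ) + 1) - (j' : ℝ)) / ((N' : ℝ) + 1) ≤ 2 / ((N' : ℝ) + 1) :=
      (div_le_div_iff_of_pos_right hN).2 hc1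
    linarith


end Analytic

/-! ### classes of functions -/

section Classes

variable {K : Type} [TopologicalSpace K] [CompactSpace K]
variable {Γ₀ : Type}

def gco (i₀ : K → Γ₀ → unitInterval) (β : Γ₀) (x : K) : ℝ := (i₀ x β : ℝ)

def cellOf (i₀ : K → Γ₀ → unitInterval) {k N' : ℕ} (β : Fin k → Γ₀)
    (σ : Fin k → Fin (N' + 1)) : Set K :=
  {x | ∀ l, gco i₀ (β l) x ∈
    Set.Icc ((σ l : ℝ) / ((N' : ℝ) + 1)) (((σ l : ℝ) + 1) / ((N' : ℝ) + 1))}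

def Cls : Type := Σ k : ℕ, Σ N' : ℕ, (Fin k → ℕ) × ((Fin k → Fin (N' + 1)) → Option ℕ)

instance : Countable Cls := by
  unfold Cls
  infer_instance

def classSet (i₀ : K → Γ₀ → unitInterval) (Δ : ℕ → ℕ → Set Γ₀) (δ δ' : ℝ) (c : Cls) :
    Set (K → ℝ) :=
  {f | Continuous f ∧ (∀ x, f x ∈ Set.Icc (0:ℝ) 1) ∧
    ∃ β : Fin c.1 → Γ₀,
      (∀ l, β l ∈ Δ c.2.1 (c.2.2.1 l)) ∧
      (∀ x y : K, (∀ l, |gco i₀ (β l) x - gco i₀ (β l) y| ≤ 2 / ((c.2.1 : ℝ) + 1)) →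
        |f x - f y| ≤ δ) ∧
      (∀ σ : Fin c.1 → Fin (c.2.1 + 1),
        (c.2.2.2 σ = none → cellOf i₀ β σ = ∅) ∧
        (∀ v : ℕ, c.2.2.2 σ = some v →
          (cellOf i₀ β σ).Nonempty ∧
          (∀ x ∈ cellOf i₀ β σ, f x ≤ (v : ℝ) * δ' + δ') ∧
          (∃ x ∈ cellOf i₀ β σ, (v : ℝ) * δ' - δ' ≤ f x)))}

lemma class_cover {i₀ : K → Γ₀ → unitInterval} (hemb : Topology.IsEmbedding i₀)
    (Δ : ℕ → ℕ → Set Γ₀) (hΔcov : ∀ N', (⋃ n, Δ N' n) = Set.univ)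
    {δ δ' : ℝ} (hδ : 0 < δ) (hδ' : 0 < δ')
    (f : K → ℝ) (hf : Continuous f) (hI : ∀ x, f x ∈ Set.Icc (0:ℝ) 1) :
    ∃ c : Cls, f ∈ classSet i₀ Δ δ δ' c := by
  classical
  obtain ⟨k, β, η, hη, hmod⟩ := modulus_lemma hemb hf hδ
  set N' := Nat.ceil (2 / η) with hN'
  have hN'le : 2 / ((N' : ℝ) + 1) ≤ η := by
    have h1 : 2 / η ≤ (N' : ℝ) := Nat.le_ceil _
    have h2 : (0:ℝ) < (N' : ℝ) + 1 := by positivity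
    rw [div_le_iff₀ h2]
    rw [div_le_iff₀ hη] at h1
    nlinarith
  have hmem : ∀ l, ∃ n, β l ∈ Δ N' n := by
    intro l
    have : β l ∈ ⋃ n, Δ N' n := by rw [hΔcov N']; trivial
    exact Set.mem_iUnion.1 this
  choose nv hnv using hmem
  set τ : (Fin k → Fin (N' + 1)) → Option ℕ := fun σ =>
    if hne : (cellOf i₀ β σ).Nonempty then
      some (Nat.floor (sSup (f '' cellOf i₀ β σ) / δ')) else none with hτ
  refine ⟨⟨k, N', nv, τ⟩, hf, hI, β, hnv, ?_, ?_⟩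
  · intro x y hxy
    exact hmod x y (fun l => le_trans (hxy l) hN'le)
  · intro σ
    constructor
    · intro hnone
      have hnone' : τ σ = none := hnone
      by_contra hne
      rw [← Set.not_nonempty_iff_eq_empty] at hne
      push_neg at hne
      rw [show τ σ = some (Nat.floor (sSup (f '' cellOf i₀ β σ) / δ')) from dif_pos hne] at hnone'
      exact Option.some_ne_none _ hnone'
    · intro v hv
      have hv' : τ σ = some v := hv
      by_cases hne : (cellOf i₀ β σ).Nonempty
      · have hveq : v = Nat.floor (sSup (f '' cellOf i₀ β σ) / δ') := by
          rw [show τ σ = some (Nat.floor (sSup (f '' cellOf i₀ β σ) / δ')) from dif_pos hne] at hv'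
          exact (Option.some_inj.1 hv').symm
        set S := sSup (f '' cellOf i₀ β σ) with hS
        have hbdd : BddAbove (f '' cellOf i₀ β σ) := by
          refine ⟨1, ?_⟩
          rintro y ⟨x, _, rfl⟩
          exact (hI x).2
        have himne : (f '' cellOf i₀ β σ).Nonempty := hne.image f
        have hSle : ∀ x ∈ cellOf i₀ β σ, f x ≤ S :=
          fun x hx => le_csSup hbdd ⟨x, hx, rfl⟩
        obtain ⟨x₀, hx₀⟩ := id hne
        have hS0 : 0 ≤ S := le_trans (hI x₀).1 (hSle x₀ hx₀)
        have hfl : ((v : ℝ)) ≤ S / δ' := by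
          rw [hveq]
          exact Nat.floor_le (by positivity)
        have hfl' : (v : ℝ) * δ' ≤ S := (le_div_iff₀ hδ').1 hfl
        have hfu : S / δ' < (v : ℝ) + 1 := by
          rw [hveq]
          exact Nat.lt_floor_add_one _
        have hfu' : S < (v : ℝ) * δ' + δ' := by
          rw [div_lt_iff₀ hδ'] at hfu
          linarith
        refine ⟨hne, fun x hx => le_trans (hSle x hx) (le_of_lt hfu'), ?_⟩
        have hlt : (v : ℝ) * δ' - δ' < S := by linarith
        obtain ⟨y, hy, hylt⟩ := exists_lt_of_lt_csSup himne hlt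
        obtain ⟨x, hx, rfl⟩ := hy
        exact ⟨x, hx, le_of_lt hylt⟩
      · rw [show τ σ = none from dif_neg hne] at hv'
        exact absurd hv'.symm (Option.some_ne_none v)


lemma div_lt_div_right' {u a b : ℝ} (hu : 0 < u) (h : a < b) : a / u < b / u :=
  (div_lt_div_iff_of_pos_right hu).2 h

lemma div_le_div_right' {u a b : ℝ} (hu : 0 < u) (h : a ≤ b) : a / u ≤ b / u :=
  (div_le_div_iff_of_pos_right hu).2 h

lemma class_noindep {i₀ : K → Γ₀ → unitInterval}
    (Δ : ℕ → ℕ → Set Γ₀)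
    (hΔprop : ∀ N' n : ℕ, ∀ p q : ℝ, q - p > 1 / (4 * ((N' : ℝ) + 1)) →
      ¬ ∃ φ : ℕ → Γ₀, (∀ m, φ m ∈ Δ N' n) ∧
        IsIndependentSeq (fun m => {x : K | (i₀ x (φ m) : ℝ) < p})
                         (fun m => {x : K | (i₀ x (φ m) : ℝ) > q}))
    {ε : ℝ} (hε : 0 < ε) (c : Cls) {p q : ℝ} (hpq : q - p > ε)
    (φ : ℕ → K → ℝ) (hφ : ∀ m, φ m ∈ classSet i₀ Δ (ε/8) (ε/16) c)
    (hind : IsIndependentSeq (fun m => {x : K | φ m x < p})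
      (fun m => {x : K | φ m x > q})) :
    False := by
  classical
  obtain ⟨k, N', nv, τ⟩ := c
  set δ : ℝ := ε/8 with hδdef
  set δ' : ℝ := ε/16 with hδ'def
  have hδpos : 0 < δ := by rw [hδdef]; positivity
  have hδ'pos : 0 < δ' := by rw [hδ'def]; positivity
  have hdata : ∀ m, ∃ β : Fin k → Γ₀,
      (∀ l, β l ∈ Δ N' (nv l)) ∧
      (∀ x y : K, (∀ l, |gco i₀ (β l) x - gco i₀ (β l) y| ≤ 2 / ((N' : ℝ) + 1)) →
        |φ m x - φ m y| ≤ δ) ∧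
      (∀ σ : Fin k → Fin (N' + 1),
        (τ σ = none → cellOf i₀ β σ = ∅) ∧
        (∀ v : ℕ, τ σ = some v → (cellOf i₀ β σ).Nonempty ∧
          (∀ x ∈ cellOf i₀ β σ, φ m x ≤ (v:ℝ) * δ' + δ') ∧
          (∃ x ∈ cellOf i₀ β σ, (v:ℝ) * δ' - δ' ≤ φ m x))) := fun m => (hφ m).2.2
  choose βf hβΔ hβmod hβτ using hdata
  set C : ℕ → (Fin k → Fin (N' + 1)) → Set K := fun m σ => cellOf i₀ (βf m) σ with hCdef
  set L : Finset (Fin k → Fin (N' + 1)) :=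
    Finset.univ.filter (fun σ => ∃ v : ℕ, τ σ = some v ∧ (v : ℝ) * δ' < p + δ + 2 * δ') with hLdef
  set H : Finset (Fin k → Fin (N' + 1)) :=
    Finset.univ.filter (fun σ => ∃ v : ℕ, τ σ = some v ∧ q - δ' < (v : ℝ) * δ') with hHdef
  have hcoord : ∀ (m : ℕ) (x : K) (l : Fin k), gco i₀ (βf m l) x ∈ Set.Icc (0:ℝ) 1 :=
    fun m x l => (i₀ x (βf m l)).2
  set σx : ℕ → K → (Fin k → Fin (N' + 1)) :=
    fun m x l => (exists_cell_index (hcoord m x l) N').choose with hσxdef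
  have hx_in_cell : ∀ m x, x ∈ cellOf i₀ (βf m) (σx m x) :=
    fun m x l => (exists_cell_index (hcoord m x l) N').choose_spec
  have hsome : ∀ m (σ : Fin k → Fin (N'+1)),
      (cellOf i₀ (βf m) σ).Nonempty → ∃ v, τ σ = some v := by
    intro m σ hne
    cases hτσ : τ σ with
    | none =>
      rw [(hβτ m σ).1 hτσ] at hne
      exact absurd hne (by simp)
    | some v => exact ⟨v, rfl⟩
  have hsamecell : ∀ (m : ℕ) (σ : Fin k → Fin (N'+1)) (x y : K),
      x ∈ cellOf i₀ (βf m) σ → y ∈ cellOf i₀ (βf m) σ → |φ m x - φ m y| ≤ δ := by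
    intro m σ x y hx hy
    apply hβmod m
    intro l
    exact dist_le_of_adjacent_cells (hx l) (hy l) (by omega) (by omega)
  have hLmem : ∀ m x, φ m x < p → σx m x ∈ L := by
    intro m x hlt
    obtain ⟨v, hv⟩ := hsome m _ ⟨x, hx_in_cell m x⟩
    obtain ⟨hne, hub, ⟨y, hy, hlb⟩⟩ := (hβτ m _).2 v hv
    have hclose := hsamecell m _ x y (hx_in_cell m x) hy
    rw [hLdef, Finset.mem_filter]
    refine ⟨Finset.mem_univ _, v, hv, ?_⟩
    have h2 := (abs_le.1 hclose).1
    linarith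
  have hHmem : ∀ m x, q < φ m x → σx m x ∈ H := by
    intro m x hlt
    obtain ⟨v, hv⟩ := hsome m _ ⟨x, hx_in_cell m x⟩
    obtain ⟨hne, hub, -⟩ := (hβτ m _).2 v hv
    have := hub x (hx_in_cell m x)
    rw [hHdef, Finset.mem_filter]
    exact ⟨Finset.mem_univ _, v, hv, by linarith⟩
  have hUI : UIndep L H C := by
    intro n ν
    obtain ⟨x, hx⟩ := hind n (fun kk => ν (kk : ℕ))
    refine ⟨fun i => σx i x, ?_, ⟨x, ?_⟩⟩
    · intro i hi
      have hxi := Set.mem_iInter.1 hx ⟨i, hi⟩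
      by_cases hν : ν i = true
      · rw [if_pos hν]
        rw [if_pos hν] at hxi
        exact hHmem i x hxi
      · rw [if_neg hν]
        rw [if_neg hν] at hxi
        exact hLmem i x hxi
    · rw [Set.mem_iInter₂]
      intro i _
      exact hx_in_cell i x
  obtain ⟨c₀, hc₀, d₀, hd₀, e, he, hpat⟩ := keyLemma L H hUI
  obtain ⟨-, hc₀p⟩ := Finset.mem_filter.1 hc₀
  obtain ⟨v_c, hτc, hvc⟩ := hc₀p
  obtain ⟨-, hd₀p⟩ := Finset.mem_filter.1 hd₀
  obtain ⟨v_d, hτd, hvd⟩ := hd₀p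
  have hsep : ∃ l : Fin k, ((c₀ l : ℕ) + 2 ≤ (d₀ l : ℕ)) ∨ ((d₀ l : ℕ) + 2 ≤ (c₀ l : ℕ)) := by
    by_contra hcon
    push_neg at hcon
    obtain ⟨hnec, hubc, -⟩ := (hβτ 0 c₀).2 v_c hτc
    obtain ⟨hned, -, ⟨y, hyd, hlbd⟩⟩ := (hβτ 0 d₀).2 v_d hτd
    obtain ⟨x, hxc⟩ := hnec
    have hclose : |φ 0 x - φ 0 y| ≤ δ := by
      apply hβmod 0
      intro l
      have h1 := hcon l
      exact dist_le_of_adjacent_cells (hxc l) (hyd l) (by omega) (by omega)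
    have hub := hubc x hxc
    have h2 := (abs_le.1 hclose).1
    rw [hδdef] at *
    rw [hδ'def] at *
    linarith
  obtain ⟨ls, hor⟩ := hsep
  set u : ℝ := (N' : ℝ) + 1 with hu
  have hupos : 0 < u := by rw [hu]; positivity
  have hgap : ∀ a : ℝ, ((a + 2/3) / u) - ((a + 1/3) / u) > 1 / (4 * u) := by
    intro a
    have h1 : ((a + 2/3) / u) - ((a + 1/3) / u) = (1/3) / u := by
      rw [div_sub_div_same]
      ring_nf
    rw [h1, show (1 : ℝ) / (4 * u) = (1/4) / u by rw [div_div]]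
    exact div_lt_div_right' hupos (by norm_num)
  rcases hor with hcd | hdc
  · set a : ℝ := (c₀ ls : ℝ) + 1 with ha
    apply hΔprop N' (nv ls) ((a + 1/3) / u) ((a + 2/3) / u) (hgap a)
    refine ⟨fun m => βf (e m) ls, fun m => hβΔ (e m) ls, ?_⟩
    intro n ν
    obtain ⟨x, hx⟩ := hpat n ν
    refine ⟨x, ?_⟩
    rw [Set.mem_iInter] at hx ⊢
    intro kk
    have hxk := hx kk
    by_cases hν : ν kk = true
    · rw [if_pos hν] at hxk ⊢
      have hcell := hxk ls
      have h1 : ((d₀ ls : ℕ) : ℝ) / u ≤ gco i₀ (βf (e (kk : ℕ)) ls) x := hcell.1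
      have h2 : ((c₀ ls : ℕ) : ℝ) + 2 ≤ ((d₀ ls : ℕ) : ℝ) := by exact_mod_cast hcd
      have h3 : (a + 2/3) / u < ((d₀ ls : ℕ) : ℝ) / u :=
        div_lt_div_right' hupos (by rw [ha]; linarith)
      show (i₀ x (βf (e (kk : ℕ)) ls) : ℝ) > (a + 2/3) / u
      have hg : gco i₀ (βf (e (kk : ℕ)) ls) x = (i₀ x (βf (e (kk : ℕ)) ls) : ℝ) := rfl
      rw [← hg]
      linarith
    · rw [if_neg hν] at hxk ⊢
      have hcell := hxk ls
      have h1 : gco i₀ (βf (e (kk : ℕ)) ls) x ≤ (((c₀ ls : ℕ) : ℝ) + 1) / u := hcell.2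
      have h3 : (((c₀ ls : ℕ) : ℝ) + 1) / u < (a + 1/3) / u :=
        div_lt_div_right' hupos (by rw [ha]; linarith)
      show (i₀ x (βf (e (kk : ℕ)) ls) : ℝ) < (a + 1/3) / u
      have hg : gco i₀ (βf (e (kk : ℕ)) ls) x = (i₀ x (βf (e (kk : ℕ)) ls) : ℝ) := rfl
      rw [← hg]
      linarith
  · set a : ℝ := (d₀ ls : ℝ) + 1 with ha
    apply hΔprop N' (nv ls) ((a + 1/3) / u) ((a + 2/3) / u) (hgap a)
    refine ⟨fun m => βf (e m) ls, fun m => hβΔ (e m) ls, ?_⟩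
    intro n ν
    obtain ⟨x, hx⟩ := hpat n (fun kk => !(ν kk))
    refine ⟨x, ?_⟩
    rw [Set.mem_iInter] at hx ⊢
    intro kk
    have hxk := hx kk
    by_cases hν : ν kk = true
    · rw [if_pos hν]
      rw [if_neg (by simp [hν])] at hxk
      have hcell := hxk ls
      have h1 : ((c₀ ls : ℕ) : ℝ) / u ≤ gco i₀ (βf (e (kk : ℕ)) ls) x := hcell.1
      have h2 : ((d₀ ls : ℕ) : ℝ) + 2 ≤ ((c₀ ls : ℕ) : ℝ) := by exact_mod_cast hdc
      have h3 : (a + 2/3) / u < ((c₀ ls : ℕ) : ℝ) / u :=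
        div_lt_div_right' hupos (by rw [ha]; linarith)
      show (i₀ x (βf (e (kk : ℕ)) ls) : ℝ) > (a + 2/3) / u
      have hg : gco i₀ (βf (e (kk : ℕ)) ls) x = (i₀ x (βf (e (kk : ℕ)) ls) : ℝ) := rfl
      rw [← hg]
      linarith
    · rw [if_neg hν]
      rw [if_pos (by simp [hν])] at hxk
      have hcell := hxk ls
      have h1 : gco i₀ (βf (e (kk : ℕ)) ls) x ≤ (((d₀ ls : ℕ) : ℝ) + 1) / u := hcell.2
      have h3 : (((d₀ ls : ℕ) : ℝ) + 1) / u < (a + 1/3) / u :=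
        div_lt_div_right' hupos (by rw [ha]; linarith)
      show (i₀ x (βf (e (kk : ℕ)) ls) : ℝ) < (a + 1/3) / u
      have hg : gco i₀ (βf (e (kk : ℕ)) ls) x = (i₀ x (βf (e (kk : ℕ)) ls) : ℝ) := rfl
      rw [← hg]
      linarith


theorem main_decomp {i₀ : K → Γ₀ → unitInterval} (hemb : Topology.IsEmbedding i₀)
    (hprop : ∀ ε : ℝ, ε > 0 → ∃ Γs : ℕ → Set Γ₀, (⋃ n, Γs n) = Set.univ ∧
      ∀ n : ℕ, ∀ p q : ℝ, q - p > ε →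
        ¬ ∃ φ : ℕ → Γ₀, (∀ m, φ m ∈ Γs n) ∧
          IsIndependentSeq (fun m => {x : K | (i₀ x (φ m) : ℝ) < p})
                           (fun m => {x : K | (i₀ x (φ m) : ℝ) > q}))
    {ε : ℝ} (hε : 0 < ε) :
    ∃ Fs : ℕ → Set (K → ℝ),
      (∀ f : K → ℝ, Continuous f → (∀ x, f x ∈ Set.Icc (0:ℝ) 1) → ∃ n, f ∈ Fs n) ∧
      (∀ n : ℕ, ∀ p q : ℝ, q - p > ε →
        ¬ ∃ φ : ℕ → (K → ℝ), (∀ m, φ m ∈ Fs n) ∧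
          IsIndependentSeq (fun m => {x : K | φ m x < p})
            (fun m => {x : K | φ m x > q})) := by
  classical
  have hdec : ∀ N' : ℕ, ∃ Γs : ℕ → Set Γ₀, (⋃ n, Γs n) = Set.univ ∧
      ∀ n : ℕ, ∀ p q : ℝ, q - p > 1 / (4 * ((N' : ℝ) + 1)) →
        ¬ ∃ φ : ℕ → Γ₀, (∀ m, φ m ∈ Γs n) ∧
          IsIndependentSeq (fun m => {x : K | (i₀ x (φ m) : ℝ) < p})
                           (fun m => {x : K | (i₀ x (φ m) : ℝ) > q}) :=
    fun N' => hprop _ (by positivity)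
  choose Δ hΔcov hΔprop using hdec
  obtain ⟨enc, henc⟩ : ∃ f : Cls → ℕ, Function.Injective f := exists_injective_nat Cls
  refine ⟨fun n => {f | ∃ c : Cls, enc c = n ∧ f ∈ classSet i₀ Δ (ε/8) (ε/16) c}, ?_, ?_⟩
  · intro f hf hI
    obtain ⟨c, hc⟩ := class_cover hemb Δ hΔcov (δ := ε/8) (δ' := ε/16) (by positivity) (by positivity) f hf hI
    exact ⟨enc c, c, rfl, hc⟩
  · rintro n p q hpq ⟨φ, hφ, hind⟩
    choose cm hcm1 hcm2 using hφ
    have hceq : ∀ m, cm m = cm 0 := fun m => henc (by rw [hcm1 m, hcm1 0])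
    have hφ' : ∀ m, φ m ∈ classSet i₀ Δ (ε/8) (ε/16) (cm 0) := fun m => hceq m ▸ hcm2 m
    exact class_noindep Δ hΔprop hε (cm 0) hpq φ hφ' hind

end Classes

end QWRNAux

theorem isQWRN_iff_forall_embedding'
    (K : Type) [TopologicalSpace K] [CompactSpace K] [T2Space K] :
    IsQWRN K ↔ ∀ (Γ : Type) (i : K → Γ → unitInterval), Topology.IsEmbedding i →
      ∀ ε : ℝ, ε > 0 → ∃ Γs : ℕ → Set Γ, (⋃ n, Γs n) = Set.univ ∧
        ∀ n : ℕ, ∀ p q : ℝ, q - p > ε →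
          ¬ ∃ φ : ℕ → Γ, (∀ m, φ m ∈ Γs n) ∧
            IsIndependentSeq (fun m => {x : K | (i x (φ m) : ℝ) < p})
                             (fun m => {x : K | (i x (φ m) : ℝ) > q}) := by
  classical
  constructor
  · rintro ⟨Γ₀, i₀, hemb, hprop⟩ Γ i hi ε hε
    obtain ⟨Fs, hcov, hni⟩ := QWRNAux.main_decomp hemb hprop hε
    refine ⟨fun n => {α | (fun x => (i x α : ℝ)) ∈ Fs n}, ?_, ?_⟩
    · rw [Set.eq_univ_iff_forall]
      intro α
      rw [Set.mem_iUnion]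
      exact hcov _ (continuous_subtype_val.comp ((continuous_apply α).comp hi.continuous))
        (fun x => (i x α).2)
    · rintro n p q hpq ⟨φ, hφ, hind⟩
      exact hni n p q hpq ⟨fun m => fun x => (i x (φ m) : ℝ), hφ, hind⟩
  · intro hall
    set e : K → C(K, unitInterval) → unitInterval := fun x f => f x with he
    have hcont : Continuous e := continuous_pi (fun f => f.continuous)
    have hinj : Function.Injective e := by
      intro x y hxy
      by_contra hne
      obtain ⟨f, hf0, hf1, hfI⟩ := exists_continuous_zero_one_of_isClosed
        (isClosed_singleton (x := x)) (isClosed_singleton (x := y))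
        (Set.disjoint_singleton.2 hne)
      set f' : C(K, unitInterval) := ⟨fun z => ⟨f z, hfI z⟩,
        Continuous.subtype_mk f.continuous _⟩ with hf'
      have h1 : e x f' = e y f' := congrFun hxy f'
      have h2 : f x = f y := congrArg Subtype.val h1
      rw [hf0 rfl, hf1 rfl] at h2
      simp at h2
    have hemb : Topology.IsEmbedding e := (hcont.isClosedEmbedding hinj).toIsEmbedding
    exact ⟨C(K, unitInterval), e, hemb, hall _ e hemb⟩


/-- A compact Hausdorff space `K` is QWRN iff for EVERY set `Γ` and every homeomorphic
embedding of `K` into `[0,1]^Γ` and every `ε > 0` there is a countable decomposition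
`Γ = ⋃ n, Γs n` such that for every `n` and all reals `p < q` with `q - p > ε`, the family
of pairs `({x | x_α < p}, {x | x_α > q})`, `α ∈ Γs n`, contains no independent sequence. -/
theorem isQWRN_iff_forall_embedding
    (K : Type) [TopologicalSpace K] [CompactSpace K] [T2Space K] :
    IsQWRN K ↔ ∀ (Γ : Type) (i : K → Γ → unitInterval), Topology.IsEmbedding i →
      ∀ ε : ℝ, ε > 0 → ∃ Γs : ℕ → Set Γ, (⋃ n, Γs n) = Set.univ ∧
        ∀ n : ℕ, ∀ p q : ℝ, q - p > ε →
          ¬ ∃ φ : ℕ → Γ, (∀ m, φ m ∈ Γs n) ∧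
            IsIndependentSeq (fun m => {x : K | (i x (φ m) : ℝ) < p})
                             (fun m => {x : K | (i x (φ m) : ℝ) > q}) :=
  isQWRN_iff_forall_embedding' K
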